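/- Let f : Ω → ℝ be continuous. Then there exist a real number λ > 0 and a Borel probability measure ν on Ω such that ∫_Ω L_f φ dν = λ ∫_Ω φ dν for every continuous φ : Ω → ℝ; that is, ν is an eigenmeasure of the dual of the Ruelle operator: L_f^* ν = λ ν. -/

import Mathlib

open MeasureTheory Filter

noncomputable section

section RMK

open TopologicalSpace Set
open scoped NNReal ENNReal

set_option linter.unusedSectionVars false

namespace RMKaux

variable {X : Type*} [TopologicalSpace X] [CompactSpace X] [T2Space X]

/-- candidate values for the content of a compact set K -/
def A (ℓ : C(X, ℝ) →ₗ[ℝ] ℝ) (K : Set X) : Set ℝ :=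
  {r | ∃ φ : C(X, ℝ), (∀ x, 0 ≤ φ x) ∧ (∀ x ∈ K, 1 ≤ φ x) ∧ ℓ φ = r}

variable (ℓ : C(X, ℝ) →ₗ[ℝ] ℝ) (hpos : ∀ g : C(X, ℝ), (∀ x, 0 ≤ g x) → 0 ≤ ℓ g)

include hpos

theorem lmono {g h : C(X, ℝ)} (hgh : ∀ x, g x ≤ h x) : ℓ g ≤ ℓ h := by
  have h1 := hpos (h - g) (fun x => by simpa using sub_nonneg.2 (hgh x))
  have h2 : 0 ≤ ℓ h - ℓ g := by simpa [map_sub] using h1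
  linarith

omit hpos in
theorem A_nonempty (K : Set X) : (A ℓ K).Nonempty :=
  ⟨ℓ 1, 1, fun x => by simp, fun x _ => by simp, rfl⟩

theorem A_nonneg {K : Set X} {r : ℝ} (hr : r ∈ A ℓ K) : 0 ≤ r := by
  obtain ⟨φ, h0, _, rfl⟩ := hr; exact hpos φ h0

theorem A_bddBelow (K : Set X) : BddBelow (A ℓ K) :=
  ⟨0, fun r hr => A_nonneg ℓ hpos hr⟩

theorem sInfA_nonneg (K : Set X) : 0 ≤ sInf (A ℓ K) :=
  le_csInf (A_nonempty ℓ K) (fun r hr => A_nonneg ℓ hpos hr)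

theorem sInfA_le {K : Set X} {φ : C(X, ℝ)} (h0 : ∀ x, 0 ≤ φ x) (h1 : ∀ x ∈ K, 1 ≤ φ x) :
    sInf (A ℓ K) ≤ ℓ φ :=
  csInf_le (A_bddBelow ℓ hpos K) ⟨φ, h0, h1, rfl⟩

omit hpos in
theorem le_sInfA {K : Set X} {c : ℝ}
    (h : ∀ φ : C(X, ℝ), (∀ x, 0 ≤ φ x) → (∀ x ∈ K, 1 ≤ φ x) → c ≤ ℓ φ) :
    c ≤ sInf (A ℓ K) :=
  le_csInf (A_nonempty ℓ K) (by rintro r ⟨φ, h0, h1, rfl⟩; exact h φ h0 h1)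

theorem sInfA_mono {K₁ K₂ : Set X} (h : K₁ ⊆ K₂) : sInf (A ℓ K₁) ≤ sInf (A ℓ K₂) :=
  le_sInfA ℓ (fun φ h0 h1 => sInfA_le ℓ hpos h0 (fun x hx => h1 x (h hx)))


/-- sub-additivity of the candidate infimum -/
theorem sInfA_union_le (K₁ K₂ : Set X) :
    sInf (A ℓ (K₁ ∪ K₂)) ≤ sInf (A ℓ K₁) + sInf (A ℓ K₂) := by
  rcases A_nonempty ℓ K₁ with ⟨r₁, hr₁⟩
  -- we show: for all r₁ ∈ A K₁, r₂ ∈ A K₂, sInf (A (K₁ ∪ K₂)) ≤ r₁ + r₂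
  have key : ∀ r₁ ∈ A ℓ K₁, ∀ r₂ ∈ A ℓ K₂, sInf (A ℓ (K₁ ∪ K₂)) ≤ r₁ + r₂ := by
    rintro r₁ ⟨φ₁, h10, h11, rfl⟩ r₂ ⟨φ₂, h20, h21, rfl⟩
    have : sInf (A ℓ (K₁ ∪ K₂)) ≤ ℓ (φ₁ + φ₂) := by
      refine sInfA_le ℓ hpos (fun x => by
        have := h10 x; have := h20 x; simp only [ContinuousMap.add_apply]; linarith) ?_
      rintro x (hx | hx)
      · have := h11 x hx; have := h20 x; simp only [ContinuousMap.add_apply]; linarith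
      · have := h21 x hx; have := h10 x; simp only [ContinuousMap.add_apply]; linarith
    simpa [map_add] using this
  have step1 : ∀ r₂ ∈ A ℓ K₂, sInf (A ℓ (K₁ ∪ K₂)) - r₂ ≤ sInf (A ℓ K₁) := by
    intro r₂ hr₂
    refine le_csInf (A_nonempty ℓ K₁) (fun r₁ hr₁ => ?_)
    have := key r₁ hr₁ r₂ hr₂; linarith
  have step2 : sInf (A ℓ (K₁ ∪ K₂)) - sInf (A ℓ K₁) ≤ sInf (A ℓ K₂) := by
    refine le_csInf (A_nonempty ℓ K₂) (fun r₂ hr₂ => ?_)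
    have := step1 r₂ hr₂; linarith
  linarith

/-- additivity on disjoint compact sets, the ≥ direction via Urysohn -/
theorem le_sInfA_union {K₁ K₂ : Set X} (hK₁ : IsCompact K₁) (hK₂ : IsClosed K₂)
    (hd : Disjoint K₁ K₂) :
    sInf (A ℓ K₁) + sInf (A ℓ K₂) ≤ sInf (A ℓ (K₁ ∪ K₂)) := by
  obtain ⟨χ, hχ1, hχ0, -, hχmem⟩ := exists_continuous_one_zero_of_isCompact hK₁ hK₂ hd
  refine le_sInfA ℓ (fun φ h0 h1 => ?_)
  have hsum : φ * χ + φ * (1 - χ) = φ := by ring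
  have e1 : sInf (A ℓ K₁) ≤ ℓ (φ * χ) := by
    refine sInfA_le ℓ hpos (fun x => mul_nonneg (h0 x) (hχmem x).1) (fun x hx => ?_)
    have hcx : χ x = 1 := hχ1 hx
    have hfx := h1 x (Or.inl hx)
    simp only [ContinuousMap.mul_apply, hcx, mul_one]; linarith
  have e2 : sInf (A ℓ K₂) ≤ ℓ (φ * (1 - χ)) := by
    refine sInfA_le ℓ hpos (fun x => mul_nonneg (h0 x) (by have := (hχmem x).2; simp; linarith))
      (fun x hx => ?_)
    have hx0 : χ x = 0 := hχ0 hx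
    have := h1 x (Or.inr hx)
    simp only [ContinuousMap.mul_apply, ContinuousMap.sub_apply, ContinuousMap.one_apply, hx0]
    linarith
  have : ℓ (φ * χ) + ℓ (φ * (1 - χ)) = ℓ φ := by rw [← map_add, hsum]
  linarith

/-- the Riesz content associated to ℓ -/
def rContent : Content X where
  toFun K := Real.toNNReal (sInf (A ℓ (K : Set X)))
  mono' K₁ K₂ h := Real.toNNReal_le_toNNReal (sInfA_mono ℓ hpos h)
  sup_le' K₁ K₂ := by
    simp only [Compacts.coe_sup]
    rw [← Real.toNNReal_add (sInfA_nonneg ℓ hpos _) (sInfA_nonneg ℓ hpos _)]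
    exact Real.toNNReal_le_toNNReal (sInfA_union_le ℓ hpos _ _)
  sup_disjoint' K₁ K₂ hd h₁ h₂ := by
    simp only [Compacts.coe_sup]
    rw [← Real.toNNReal_add (sInfA_nonneg ℓ hpos _) (sInfA_nonneg ℓ hpos _)]
    refine congrArg Real.toNNReal (le_antisymm (sInfA_union_le ℓ hpos _ _) ?_)
    exact le_sInfA_union ℓ hpos K₁.2 h₂ hd


variable [MeasurableSpace X] [BorelSpace X]

/-- the Riesz measure associated to ℓ -/
def rMeasure : Measure X := (rContent ℓ hpos).measure

theorem rMeasure_univ : rMeasure ℓ hpos univ = ENNReal.ofReal (ℓ 1) := by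
  rw [rMeasure, Content.measure_apply _ MeasurableSet.univ]
  have e1 : (rContent ℓ hpos).outerMeasure (univ : Set X)
      = (rContent ℓ hpos).innerContent ⟨univ, isOpen_univ⟩ :=
    Content.outerMeasure_opens _ ⟨univ, isOpen_univ⟩
  rw [e1, Content.innerContent_of_isCompact _ isCompact_univ isOpen_univ]
  have h3 : sInf (A ℓ (univ : Set X)) = ℓ 1 := by
    refine le_antisymm (sInfA_le ℓ hpos (by simp) (by simp)) ?_
    exact le_sInfA ℓ fun φ h0 h1 => lmono ℓ hpos (fun x => by simpa using h1 x trivial)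
  show ((Real.toNNReal (sInf (A ℓ (univ : Set X))) : ℝ≥0) : ℝ≥0∞) = _
  rw [h3, ENNReal.ofReal]

theorem l_le_rMeasure (g : C(X, ℝ)) (hg0 : ∀ x, 0 ≤ g x) (hg1 : ∀ x, g x ≤ 1)
    {U : Set X} (hU : IsOpen U) (hsupp : tsupport ⇑g ⊆ U) :
    ENNReal.ofReal (ℓ g) ≤ rMeasure ℓ hpos U := by
  have hKc : IsCompact (tsupport ⇑g) := (isClosed_tsupport _).isCompact
  have h1 : ℓ g ≤ sInf (A ℓ (tsupport ⇑g)) := by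
    refine le_sInfA ℓ (fun ψ hψ0 hψ1 => lmono ℓ hpos (fun x => ?_))
    by_cases hx : x ∈ tsupport ⇑g
    · exact le_trans (hg1 x) (hψ1 x hx)
    · rw [image_eq_zero_of_notMem_tsupport hx]; exact hψ0 x
  calc ENNReal.ofReal (ℓ g) ≤ ENNReal.ofReal (sInf (A ℓ (tsupport ⇑g))) :=
        ENNReal.ofReal_le_ofReal h1
    _ = ((rContent ℓ hpos) ⟨tsupport ⇑g, hKc⟩ : ℝ≥0∞) := rfl
    _ ≤ (rContent ℓ hpos).innerContent ⟨U, hU⟩ :=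
        Content.le_innerContent _ ⟨tsupport ⇑g, hKc⟩ ⟨U, hU⟩ hsupp
    _ = rMeasure ℓ hpos U := by
        rw [rMeasure, Content.measure_apply _ hU.measurableSet]
        exact (Content.outerMeasure_opens _ ⟨U, hU⟩).symm

theorem rMeasure_prob (hone : ℓ 1 = 1) : IsProbabilityMeasure (rMeasure ℓ hpos) :=
  ⟨by rw [rMeasure_univ ℓ hpos, hone, ENNReal.ofReal_one]⟩


theorem integrable_cm (hone : ℓ 1 = 1) (g : C(X, ℝ)) : Integrable (⇑g) (rMeasure ℓ hpos) := by
  haveI := rMeasure_prob ℓ hpos hone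
  exact g.continuous.integrable_of_hasCompactSupport (isClosed_tsupport _).isCompact

theorem l_le_integral_eps (hone : ℓ 1 = 1) (g : C(X, ℝ)) (hg0 : ∀ x, 0 ≤ g x)
    {ε : ℝ} (hε : 0 < ε) (hε1 : ε ≤ 1) :
    ℓ g ≤ ∫ x, g x ∂(rMeasure ℓ hpos) + ε * (‖g‖ + 4) := by
  set ν := rMeasure ℓ hpos with hν
  haveI hP : IsProbabilityMeasure ν := rMeasure_prob ℓ hpos hone
  haveI hOR : ν.OuterRegular := Content.outerRegular _
  set b := ‖g‖ with hbdef
  have hb0 : (0:ℝ) ≤ b := norm_nonneg g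
  have hgb : ∀ x, g x ≤ b := fun x => le_trans (le_abs_self _) (g.norm_coe_le_norm x)
  set N := ⌈b / ε⌉₊ + 1 with hNdef
  have hNR : (0:ℝ) < N := by positivity
  have hNε : (N:ℝ) * ε ≤ b + 2 * ε := by
    have h1 : (⌈b / ε⌉₊ : ℝ) < b / ε + 1 := Nat.ceil_lt_add_one (div_nonneg hb0 hε.le)
    have h2 : b / ε * ε = b := div_mul_cancel₀ _ hε.ne'
    have : (N : ℝ) = (⌈b / ε⌉₊ : ℝ) + 1 := by push_cast [hNdef]; ring
    nlinarith
  -- the slices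
  set E : Fin N → Set X := fun i => ⇑g ⁻¹' (Ioc ((i:ℝ) * ε - ε) ((i:ℝ) * ε)) with hEdef
  have hEm : ∀ i, MeasurableSet (E i) := fun i => g.continuous.measurable measurableSet_Ioc
  have hEd : Pairwise (Function.onFun Disjoint E) := by
    intro i j hij
    rw [Function.onFun, Set.disjoint_left]
    intro x hxi hxj
    simp only [hEdef, mem_preimage, mem_Ioc] at hxi hxj
    have hne : (i : ℕ) ≠ (j : ℕ) := fun hc => hij (Fin.ext hc)
    rcases hne.lt_or_gt with hlt | hlt
    · have : ((i:ℕ):ℝ) + 1 ≤ ((j:ℕ):ℝ) := by exact_mod_cast hlt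
      nlinarith [hxi.2, hxj.1]
    · have : ((j:ℕ):ℝ) + 1 ≤ ((i:ℕ):ℝ) := by exact_mod_cast hlt
      nlinarith [hxj.2, hxi.1]
  have hcov : (⋃ i, E i) = univ := by
    refine eq_univ_of_forall fun x => mem_iUnion.2 ?_
    have hx0 : 0 ≤ g x / ε := div_nonneg (hg0 x) hε.le
    have hlt : ⌈g x / ε⌉₊ < N := by
      have : ⌈g x / ε⌉₊ ≤ ⌈b / ε⌉₊ :=
        Nat.ceil_le_ceil ((div_le_div_iff_of_pos_right hε).2 (hgb x))
      omega
    refine ⟨⟨⌈g x / ε⌉₊, hlt⟩, ?_⟩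
    simp only [hEdef, mem_preimage, mem_Ioc]
    constructor
    · have h2 : (⌈g x / ε⌉₊ : ℝ) < g x / ε + 1 := Nat.ceil_lt_add_one hx0
      have h3 := mul_lt_mul_of_pos_right h2 hε
      have h4 : g x / ε * ε = g x := div_mul_cancel₀ _ hε.ne'
      have h5 : ((⟨⌈g x / ε⌉₊, hlt⟩ : Fin N) : ℝ) = (⌈g x / ε⌉₊ : ℝ) := rfl
      rw [h5]; nlinarith
    · have h3 : g x / ε ≤ (⌈g x / ε⌉₊ : ℝ) := Nat.le_ceil _
      have h4 : g x / ε * ε = g x := div_mul_cancel₀ _ hε.ne'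
      have h5 : ((⟨⌈g x / ε⌉₊, hlt⟩ : Fin N) : ℝ) = (⌈g x / ε⌉₊ : ℝ) := rfl
      rw [h5]; nlinarith [mul_le_mul_of_nonneg_right h3 hε.le]
  -- the open covers
  have hfin : ∀ s : Set X, ν s ≠ ⊤ := fun s => (measure_lt_top ν s).ne
  have hεN0 : ENNReal.ofReal (ε / N) ≠ 0 := (ENNReal.ofReal_pos.2 (by positivity)).ne'
  choose V hVsub hVopen hVlt using fun i =>
    Set.exists_isOpen_lt_add (μ := ν) (E i) (hfin (E i)) hεN0
  set U : Fin N → Set X := fun i => V i ∩ {x | g x < (i:ℝ) * ε + ε} with hUdef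
  have hUopen : ∀ i, IsOpen (U i) := fun i =>
    (hVopen i).inter (isOpen_lt g.continuous continuous_const)
  have hEU : ∀ i, E i ⊆ U i := by
    intro i x hx
    have hx' : x ∈ ⇑g ⁻¹' (Ioc ((i:ℝ) * ε - ε) ((i:ℝ) * ε)) := hx
    simp only [mem_preimage, mem_Ioc] at hx'
    exact ⟨hVsub i hx, by simp only [mem_setOf_eq]; linarith [hx'.2]⟩
  have hUcov : (univ : Set X) ⊆ ⋃ i, U i := by
    rw [← hcov]; exact iUnion_mono hEU
  have hUν : ∀ i, ν (U i) ≤ ν (E i) + ENNReal.ofReal (ε / N) := fun i =>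
    le_trans (measure_mono inter_subset_left) (hVlt i).le
  -- partition of unity
  obtain ⟨h, hsupp, hsum1, h01, -⟩ :=
    exists_continuous_sum_one_of_isOpen_isCompact hUopen isCompact_univ hUcov
  have hgdecomp : ℓ g = ∑ i, ℓ (h i * g) := by
    rw [← map_sum]
    congr 1
    ext x
    have h1x := hsum1 (mem_univ x)
    simp only [Finset.sum_apply, Pi.one_apply] at h1x
    simp only [ContinuousMap.coe_sum, Finset.sum_apply, ContinuousMap.mul_apply]
    rw [← Finset.sum_mul, h1x, one_mul]
  have key : ∀ i : Fin N, ℓ (h i * g) ≤ ((i:ℝ) * ε + ε) * ((ν (E i)).toReal + ε / N) := by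
    intro i
    have hc0 : (0:ℝ) ≤ (i:ℝ) * ε + ε := by positivity
    have s1 : ℓ (h i * g) ≤ ((i:ℝ) * ε + ε) * ℓ (h i) := by
      have hpt : ∀ x, (h i * g) x ≤ (((i:ℝ) * ε + ε) • h i) x := by
        intro x
        simp only [ContinuousMap.mul_apply, ContinuousMap.smul_apply, smul_eq_mul]
        by_cases hx : h i x = 0
        · rw [hx]; simp
        · have hxU : x ∈ U i := hsupp i (subset_tsupport _ hx)
          have hgx : g x < (i:ℝ) * ε + ε := hxU.2
          have h0x := (h01 i x).1
          nlinarith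
      have := lmono ℓ hpos hpt
      simpa [_root_.map_smul, smul_eq_mul] using this
    have s2 : ℓ (h i) ≤ (ν (U i)).toReal := by
      have hb := l_le_rMeasure ℓ hpos (h i) (fun x => (h01 i x).1) (fun x => (h01 i x).2)
        (hUopen i) (hsupp i)
      exact (ENNReal.ofReal_le_iff_le_toReal (hfin _)).1 hb
    have s3 : (ν (U i)).toReal ≤ (ν (E i)).toReal + ε / N := by
      have h2 := ENNReal.toReal_mono
        (by exact ENNReal.add_ne_top.2 ⟨hfin _, ENNReal.ofReal_ne_top⟩) (hUν i)
      rwa [ENNReal.toReal_add (hfin _) ENNReal.ofReal_ne_top,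
        ENNReal.toReal_ofReal (by positivity)] at h2
    calc ℓ (h i * g) ≤ ((i:ℝ) * ε + ε) * ℓ (h i) := s1
      _ ≤ ((i:ℝ) * ε + ε) * (ν (U i)).toReal := mul_le_mul_of_nonneg_left s2 hc0
      _ ≤ ((i:ℝ) * ε + ε) * ((ν (E i)).toReal + ε / N) := mul_le_mul_of_nonneg_left s3 hc0
  -- summing up
  have hIntg : Integrable (⇑g) ν := integrable_cm ℓ hpos hone g
  have hInt : Integrable (fun x => g x + 2 * ε) ν := hIntg.add (integrable_const _)
  have hsetle : ∀ i : Fin N, ((i:ℝ) * ε + ε) * ((ν (E i)).toReal)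
      ≤ ∫ x in E i, (g x + 2 * ε) ∂ν := by
    intro i
    have h1 : ∫ x in E i, ((i:ℝ) * ε + ε) ∂ν = (ν (E i)).toReal • ((i:ℝ) * ε + ε) :=
      setIntegral_const _
    have h2 : ((i:ℝ) * ε + ε) * (ν (E i)).toReal = ∫ x in E i, ((i:ℝ) * ε + ε) ∂ν := by
      rw [h1, smul_eq_mul, mul_comm]
    rw [h2]
    refine setIntegral_mono_on (integrableOn_const (measure_lt_top ν _).ne)
      (hInt.integrableOn) (hEm i) ?_
    intro x hx
    have hx' : x ∈ ⇑g ⁻¹' (Ioc ((i:ℝ) * ε - ε) ((i:ℝ) * ε)) := hx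
    simp only [mem_preimage, mem_Ioc] at hx'
    linarith [hx'.1]
  have hsum_set : ∑ i, ∫ x in E i, (g x + 2 * ε) ∂ν = ∫ x, (g x + 2 * ε) ∂ν := by
    have h2 := integral_iUnion hEm hEd hInt.integrableOn
    rw [hcov, setIntegral_univ] at h2
    exact (tsum_fintype _).symm.trans h2.symm
  have hintadd : ∫ x, (g x + 2 * ε) ∂ν = (∫ x, g x ∂ν) + 2 * ε := by
    rw [integral_add hIntg (integrable_const _), integral_const, probReal_univ]
    simp
  have hA : ∑ i : Fin N, ((i:ℝ) * ε + ε) * (ν (E i)).toReal ≤ (∫ x, g x ∂ν) + 2 * ε := by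
    calc ∑ i : Fin N, ((i:ℝ) * ε + ε) * (ν (E i)).toReal
        ≤ ∑ i : Fin N, ∫ x in E i, (g x + 2 * ε) ∂ν := Finset.sum_le_sum fun i _ => hsetle i
      _ = (∫ x, g x ∂ν) + 2 * ε := by rw [hsum_set, hintadd]
  have hB : ∑ i : Fin N, ((i:ℝ) * ε + ε) * (ε / N) ≤ ε * (b + 2 * ε) := by
    have hcle : ∀ i : Fin N, ((i:ℝ) * ε + ε) * (ε / N) ≤ ((N:ℝ) * ε) * (ε / N) := by
      intro i
      have h5 : ((i:ℕ):ℝ) + 1 ≤ (N:ℝ) := by exact_mod_cast i.isLt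
      have hd : (0:ℝ) ≤ ε / N := by positivity
      have h6 : (i:ℝ) * ε + ε ≤ (N:ℝ) * ε := by nlinarith
      exact mul_le_mul_of_nonneg_right h6 hd
    calc ∑ i : Fin N, ((i:ℝ) * ε + ε) * (ε / N)
        ≤ ∑ _i : Fin N, ((N:ℝ) * ε) * (ε / N) := Finset.sum_le_sum fun i _ => hcle i
      _ = (N:ℝ) * (((N:ℝ) * ε) * (ε / N)) := by
          rw [Finset.sum_const, Finset.card_univ, Fintype.card_fin, nsmul_eq_mul]
      _ = ((N:ℝ) * ε) * ε := by field_simp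
      _ ≤ (b + 2 * ε) * ε := mul_le_mul_of_nonneg_right hNε hε.le
      _ = ε * (b + 2 * ε) := by ring
  have htotal : ℓ g ≤ (∫ x, g x ∂ν) + 2 * ε + ε * (b + 2 * ε) := by
    calc ℓ g = ∑ i, ℓ (h i * g) := hgdecomp
      _ ≤ ∑ i : Fin N, ((i:ℝ) * ε + ε) * ((ν (E i)).toReal + ε / N) :=
          Finset.sum_le_sum fun i _ => key i
      _ = (∑ i : Fin N, ((i:ℝ) * ε + ε) * (ν (E i)).toReal)
          + ∑ i : Fin N, ((i:ℝ) * ε + ε) * (ε / N) := by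
          rw [← Finset.sum_add_distrib]; congr 1; ext i; ring
      _ ≤ (∫ x, g x ∂ν) + 2 * ε + ε * (b + 2 * ε) := add_le_add hA hB
  nlinarith [htotal]


theorem l_le_integral (hone : ℓ 1 = 1) (g : C(X, ℝ)) :
    ℓ g ≤ ∫ x, g x ∂(rMeasure ℓ hpos) := by
  haveI hP : IsProbabilityMeasure (rMeasure ℓ hpos) := rMeasure_prob ℓ hpos hone
  -- first for nonnegative functions
  have main : ∀ g' : C(X, ℝ), (∀ x, 0 ≤ g' x) → ℓ g' ≤ ∫ x, g' x ∂(rMeasure ℓ hpos) := by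
    intro g' hg0
    by_contra hcon
    push_neg at hcon
    set I := ∫ x, g' x ∂(rMeasure ℓ hpos)
    set δ := (ℓ g' - I) / (‖g'‖ + 5) with hδdef
    have hno : (0:ℝ) < ‖g'‖ + 5 := by positivity
    have hδ : 0 < δ := div_pos (by linarith) hno
    have hεle : min δ 1 ≤ δ := min_le_left _ _
    have hε : 0 < min δ 1 := lt_min hδ one_pos
    have := l_le_integral_eps ℓ hpos hone g' hg0 hε (min_le_right _ _)
    have h2 : min δ 1 * (‖g'‖ + 4) ≤ δ * (‖g'‖ + 4) :=
      mul_le_mul_of_nonneg_right hεle (by positivity)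
    have h3 : δ * (‖g'‖ + 4) < δ * (‖g'‖ + 5) := by nlinarith
    have h4 : δ * (‖g'‖ + 5) = ℓ g' - I := by
      rw [hδdef]; field_simp
    linarith
  -- general case by shifting
  have hb : ∀ x, 0 ≤ g x + ‖g‖ := by
    intro x
    have := neg_abs_le (g x)
    have h2 : |g x| ≤ ‖g‖ := g.norm_coe_le_norm x
    linarith
  have h5 := main (g + ‖g‖ • 1) (fun x => by simpa using hb x)
  have h6 : ℓ (g + ‖g‖ • 1) = ℓ g + ‖g‖ := by
    rw [map_add, _root_.map_smul, smul_eq_mul, hone, mul_one]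
  have h7 : ∫ x, (g + ‖g‖ • 1) x ∂(rMeasure ℓ hpos)
      = (∫ x, g x ∂(rMeasure ℓ hpos)) + ‖g‖ := by
    have : (⇑(g + ‖g‖ • 1)) = fun x => g x + ‖g‖ := by
      ext x; simp
    rw [this, integral_add (integrable_cm ℓ hpos hone g) (integrable_const _),
      integral_const, probReal_univ]
    simp
  rw [h6, h7] at h5
  linarith

/-- The Riesz–Markov–Kakutani representation theorem, for a positive normalized linear
functional on a compact Hausdorff space. -/
theorem rmk_rep (hone : ℓ 1 = 1) (g : C(X, ℝ)) :
    ∫ x, g x ∂(rMeasure ℓ hpos) = ℓ g := by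
  refine le_antisymm ?_ (l_le_integral ℓ hpos hone g)
  have h1 := l_le_integral ℓ hpos hone (-g)
  have h2 : ℓ (-g) = -ℓ g := by rw [map_neg]
  have h3 : ∫ x, (-g) x ∂(rMeasure ℓ hpos) = -∫ x, g x ∂(rMeasure ℓ hpos) := by
    have : (⇑(-g)) = fun x => -(g x) := by ext x; simp
    rw [this, integral_neg]
  rw [h2, h3] at h1
  linarith

end RMKaux

end RMK

namespace Paper

variable {M : Type*} [MetricSpace M]

/-- Prepend one symbol: `ax = (a, x₁, x₂, …)`. -/
def cons (a : M) (x : ℕ → M) : ℕ → M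
  | 0 => a
  | n + 1 => x n

/-- Prepend a finite word `a ∈ Mⁿ`. -/
def consW {n : ℕ} (a : Fin n → M) (x : ℕ → M) : ℕ → M :=
  fun k => if h : k < n then a ⟨k, h⟩ else x (k - n)

/-- The left shift `σ`. -/
def shift (x : ℕ → M) : ℕ → M := fun n => x (n + 1)

/-- Birkhoff sum `Sₙ f = f + f∘σ + … + f∘σ^{n-1}`. -/
def birk (f : (ℕ → M) → ℝ) (n : ℕ) (x : ℕ → M) : ℝ :=
  ∑ i ∈ Finset.range n, f (shift^[i] x)

/-- The metric `d_Ω(x,y) = Σ_{n≥1} 2^{-n} d(xₙ,yₙ)`. -/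
def dOmega (x y : ℕ → M) : ℝ :=
  ∑' n : ℕ, (1 / 2 : ℝ) ^ (n + 1) * dist (x n) (y n)

/-- `dₙ(x,y) = max_{0 ≤ k < n} d_Ω(σᵏx, σᵏy)`. -/
def dN (n : ℕ) (x y : ℕ → M) : ℝ :=
  ⨆ k : Fin n, dOmega (shift^[(k : ℕ)] x) (shift^[(k : ℕ)] y)

/-- The (strong) Walters condition. -/
def Walters (f : (ℕ → M) → ℝ) : Prop :=
  ∀ ε : ℝ, 0 < ε → ∃ η : ℝ, 0 < η ∧ ∀ n : ℕ, 1 ≤ n → ∀ x y : ℕ → M,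
    dN n x y ≤ η → |birk f n x - birk f n y| ≤ ε

/-- `C_f(x,y) = sup_{n ≥ 1} sup_{a ∈ Mⁿ} (Sₙf(ax) − Sₙf(ay))`, a value in `(−∞,+∞]`. -/
def Cf (f : (ℕ → M) → ℝ) (x y : ℕ → M) : EReal :=
  ⨆ n : ℕ, ⨆ a : Fin (n + 1) → M,
    ((birk f (n + 1) (consW a x) - birk f (n + 1) (consW a y) : ℝ) : EReal)

/-- The weak Walters condition. -/
def WeakWalters (f : (ℕ → M) → ℝ) : Prop :=
  ∀ ε : ℝ, 0 < ε → ∃ δ : ℝ, 0 < δ ∧ ∀ x y : ℕ → M,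
    dOmega x y ≤ δ → Cf f x y ≤ (ε : EReal)

variable [MeasurableSpace M]

/-- The Ruelle operator `L_f φ(x) = ∫_M e^{f(ax)} φ(ax) dμ(a)`. -/
def ruelle (μ : Measure M) (f : (ℕ → M) → ℝ) (φ : (ℕ → M) → ℝ) : (ℕ → M) → ℝ :=
  fun x => ∫ a, Real.exp (f (cons a x)) * φ (cons a x) ∂μ

/-- The Ruelle operator with weight `g`: `Lφ(x) = ∫_M g(ax) φ(ax) dμ(a)`. -/
def ruelleG (μ : Measure M) (g : (ℕ → M) → ℝ) (φ : (ℕ → M) → ℝ) : (ℕ → M) → ℝ :=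
  fun x => ∫ a, g (cons a x) * φ (cons a x) ∂μ


section RuelleLemmas

variable [CompactSpace M] [BorelSpace M]

theorem continuous_cons : Continuous (fun p : M × (ℕ → M) => cons p.1 p.2) := by
  apply continuous_pi
  intro n
  cases n with
  | zero => exact continuous_fst
  | succ k => exact (continuous_apply k).comp continuous_snd

theorem continuous_kernel {f φ : (ℕ → M) → ℝ} (hf : Continuous f) (hφ : Continuous φ) :
    Continuous (fun p : M × (ℕ → M) => Real.exp (f (cons p.1 p.2)) * φ (cons p.1 p.2)) :=
  ((Real.continuous_exp.comp (hf.comp continuous_cons)).mul (hφ.comp continuous_cons))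

theorem continuous_cons_left (x : ℕ → M) : Continuous (fun a : M => cons a x) := by
  apply continuous_pi
  intro n
  cases n with
  | zero => exact continuous_id
  | succ k => exact continuous_const

theorem continuous_cons_right (a : M) : Continuous (fun x : ℕ → M => cons a x) := by
  apply continuous_pi
  intro n
  cases n with
  | zero => exact continuous_const
  | succ k => exact continuous_apply k

theorem continuous_kernel_left {f φ : (ℕ → M) → ℝ} (hf : Continuous f) (hφ : Continuous φ)
    (x : ℕ → M) :
    Continuous (fun a : M => Real.exp (f (cons a x)) * φ (cons a x)) :=
  ((Real.continuous_exp.comp (hf.comp (continuous_cons_left x))).mul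
    (hφ.comp (continuous_cons_left x)))

theorem continuous_kernel_right {f φ : (ℕ → M) → ℝ} (hf : Continuous f) (hφ : Continuous φ)
    (a : M) :
    Continuous (fun x : ℕ → M => Real.exp (f (cons a x)) * φ (cons a x)) :=
  ((Real.continuous_exp.comp (hf.comp (continuous_cons_right a))).mul
    (hφ.comp (continuous_cons_right a)))

variable (μ : Measure M) [IsProbabilityMeasure μ]

theorem integrable_kernel {f φ : (ℕ → M) → ℝ} (hf : Continuous f) (hφ : Continuous φ)
    (x : ℕ → M) :
    Integrable (fun a => Real.exp (f (cons a x)) * φ (cons a x)) μ := by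
  exact (continuous_kernel_left hf hφ x).integrable_of_hasCompactSupport
    (isClosed_tsupport _).isCompact

theorem continuous_ruelle {f φ : (ℕ → M) → ℝ} (hf : Continuous f) (hφ : Continuous φ) :
    Continuous (ruelle μ f φ) := by
  set G : C(M × (ℕ → M), ℝ) :=
    ⟨fun p => Real.exp (f (cons p.1 p.2)) * φ (cons p.1 p.2), continuous_kernel hf hφ⟩ with hG
  refine MeasureTheory.continuous_of_dominated (bound := fun _ => ‖G‖) ?_ ?_ ?_ ?_
  · intro x
    exact (continuous_kernel_left hf hφ x).aestronglyMeasurable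
  · intro x
    exact Filter.Eventually.of_forall fun a => G.norm_coe_le_norm (a, x)
  · exact integrable_const _
  · exact Filter.Eventually.of_forall fun a => continuous_kernel_right hf hφ a

theorem ruelle_mono {f φ ψ : (ℕ → M) → ℝ} (hf : Continuous f) (hφ : Continuous φ)
    (hψ : Continuous ψ) (h : ∀ y, φ y ≤ ψ y) (x : ℕ → M) :
    ruelle μ f φ x ≤ ruelle μ f ψ x := by
  refine integral_mono (integrable_kernel μ hf hφ x) (integrable_kernel μ hf hψ x) ?_
  intro a
  have h1 := h (cons a x)
  have he := Real.exp_pos (f (cons a x))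
  exact mul_le_mul_of_nonneg_left h1 he.le

theorem ruelle_smul (f : (ℕ → M) → ℝ) (c : ℝ) (φ : (ℕ → M) → ℝ) (x : ℕ → M) :
    ruelle μ f (fun y => c * φ y) x = c * ruelle μ f φ x := by
  simp only [ruelle]
  rw [← integral_const_mul]
  congr 1; ext a; ring

theorem ruelle_add {f φ ψ : (ℕ → M) → ℝ} (hf : Continuous f) (hφ : Continuous φ)
    (hψ : Continuous ψ) (x : ℕ → M) :
    ruelle μ f (fun y => φ y + ψ y) x = ruelle μ f φ x + ruelle μ f ψ x := by
  simp only [ruelle]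
  rw [← integral_add (integrable_kernel μ hf hφ x) (integrable_kernel μ hf hψ x)]
  congr 1; ext a; ring

end RuelleLemmas


section CW

variable [CompactSpace M] [BorelSpace M]
variable (μ : Measure M) [IsProbabilityMeasure μ]

/-- The Ruelle operator as a map on continuous functions. -/
def Lop {f : (ℕ → M) → ℝ} (hf : Continuous f) (φ : C((ℕ → M), ℝ)) : C((ℕ → M), ℝ) :=
  ⟨ruelle μ f ⇑φ, continuous_ruelle μ hf φ.continuous⟩

theorem Lop_apply {f : (ℕ → M) → ℝ} (hf : Continuous f) (φ : C((ℕ → M), ℝ)) (x : ℕ → M) :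
    Lop μ hf φ x = ruelle μ f ⇑φ x := rfl

theorem Lop_add {f : (ℕ → M) → ℝ} (hf : Continuous f) (φ ψ : C((ℕ → M), ℝ)) :
    Lop μ hf (φ + ψ) = Lop μ hf φ + Lop μ hf ψ := by
  ext x
  have e : ⇑(φ + ψ) = fun y => φ y + ψ y := rfl
  simp only [ContinuousMap.add_apply, Lop_apply, e]
  exact ruelle_add μ hf φ.continuous ψ.continuous x

theorem Lop_smul {f : (ℕ → M) → ℝ} (hf : Continuous f) (c : ℝ) (φ : C((ℕ → M), ℝ)) :
    Lop μ hf (c • φ) = c • Lop μ hf φ := by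
  ext x
  have e : ⇑(c • φ) = fun y => c * φ y := rfl
  simp only [ContinuousMap.smul_apply, Lop_apply, e, smul_eq_mul]
  exact ruelle_smul μ f c (⇑φ) x

theorem Lop_zero {f : (ℕ → M) → ℝ} (hf : Continuous f) : Lop μ hf 0 = 0 := by
  ext x
  have e : ⇑(0 : C((ℕ → M), ℝ)) = fun _ => (0:ℝ) := rfl
  simp only [Lop_apply, e, ContinuousMap.zero_apply, ruelle]
  simp

include μ in
theorem nonempty_of_prob : Nonempty M := by
  by_contra hM
  rw [not_nonempty_iff] at hM
  have h1 : μ Set.univ = 1 := measure_univ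
  rw [Set.univ_eq_empty_iff.2 hM, measure_empty] at h1
  exact zero_ne_one h1

/-- Collatz–Wielandt: there is `lam > 0` such that no continuous `φ` satisfies
`lam * φ < L φ` everywhere. -/
theorem exists_lam_key {f : (ℕ → M) → ℝ} (hf : Continuous f) :
    ∃ lam : ℝ, 0 < lam ∧ ∀ φ : C((ℕ → M), ℝ), ∃ x, ruelle μ f ⇑φ x ≤ lam * φ x := by
  haveI hM : Nonempty M := nonempty_of_prob μ
  haveI hΩ : Nonempty (ℕ → M) := ⟨fun _ => Classical.arbitrary M⟩
  set fc : C((ℕ → M), ℝ) := ⟨f, hf⟩ with hfc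
  set c₀ : ℝ := Real.exp (-‖fc‖) with hc₀
  have hc₀pos : 0 < c₀ := Real.exp_pos _
  have hc₀le : ∀ y, c₀ ≤ Real.exp (f y) := by
    intro y
    apply Real.exp_le_exp.2
    have := fc.norm_coe_le_norm y
    have h2 : |f y| ≤ ‖fc‖ := by simpa [hfc] using this
    have := abs_le.1 h2
    linarith [this.1]
  -- the Collatz–Wielandt set
  set S : Set ℝ := {r : ℝ | ∃ ψ : C((ℕ → M), ℝ),
    (∀ x, 0 < ψ x) ∧ ∀ x, ruelle μ f ⇑ψ x ≤ r * ψ x} with hS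
  have hSne : S.Nonempty := by
    have hcont : Continuous (ruelle μ f ⇑(1 : C((ℕ → M), ℝ))) :=
      continuous_ruelle μ hf (map_continuous _)
    obtain ⟨xM, -, hxM⟩ := isCompact_univ.exists_isMaxOn Set.univ_nonempty hcont.continuousOn
    refine ⟨ruelle μ f ⇑(1 : C((ℕ → M), ℝ)) xM, 1, fun x => one_pos, fun x => ?_⟩
    simpa using hxM (Set.mem_univ x)
  have hSlb : ∀ r ∈ S, c₀ ≤ r := by
    rintro r ⟨ψ, hψpos, hψle⟩
    obtain ⟨x₀, -, hx₀'⟩ := isCompact_univ.exists_isMinOn Set.univ_nonempty ψ.continuous.continuousOn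
    have hx₀ : ∀ y, ψ x₀ ≤ ψ y := fun y => hx₀' (Set.mem_univ y)
    have h1 : c₀ * ψ x₀ ≤ ruelle μ f ⇑ψ x₀ := by
      have hint : ∫ (_ : M), c₀ * ψ x₀ ∂μ = c₀ * ψ x₀ := by
        rw [integral_const, probReal_univ]; simp
      rw [← hint]
      refine integral_mono (integrable_const _)
        (integrable_kernel μ hf ψ.continuous x₀) (fun a => ?_)
      exact mul_le_mul (hc₀le _) (hx₀ (cons a x₀)) (hψpos x₀).le
        (Real.exp_pos _).le
    have h2 := hψle x₀
    have h3 : c₀ * ψ x₀ ≤ r * ψ x₀ := le_trans h1 h2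
    exact le_of_mul_le_mul_right (by linarith [h3]) (hψpos x₀)
  have hSbdd : BddBelow S := ⟨c₀, hSlb⟩
  set lam := sInf S with hlam
  have hlamc₀ : c₀ ≤ lam := le_csInf hSne hSlb
  have hlampos : 0 < lam := lt_of_lt_of_le hc₀pos hlamc₀
  refine ⟨lam, hlampos, fun φ => ?_⟩
  by_contra hcon
  push_neg at hcon
  by_cases hpos : ∃ x₁, 0 < φ x₁
  · obtain ⟨x₁, hx1pos⟩ := hpos
    -- minimum of L φ - lam φ
    have hcont : Continuous fun x => ruelle μ f ⇑φ x - lam * φ x :=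
      (continuous_ruelle μ hf φ.continuous).sub (continuous_const.mul φ.continuous)
    obtain ⟨xε, -, hxε'⟩ := isCompact_univ.exists_isMinOn Set.univ_nonempty hcont.continuousOn
    have hxε : ∀ y, ruelle μ f ⇑φ xε - lam * φ xε ≤ ruelle μ f ⇑φ y - lam * φ y :=
      fun y => hxε' (Set.mem_univ y)
    set ε := ruelle μ f ⇑φ xε - lam * φ xε with hεdef
    have hε0 : 0 < ε := sub_pos.2 (hcon xε)
    have hnorm1 : (0:ℝ) < ‖φ‖ + 1 := by positivity
    set t' := lam + ε / (‖φ‖ + 1) with ht'def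
    have ht'lam : lam < t' := by
      have : 0 < ε / (‖φ‖ + 1) := by positivity
      rw [ht'def]; linarith
    have ht'φ : ∀ x, t' * φ x < ruelle μ f ⇑φ x := by
      intro x
      have h1 : ε ≤ ruelle μ f ⇑φ x - lam * φ x := hxε x
      have h2 : φ x ≤ ‖φ‖ := le_trans (le_abs_self _) (φ.norm_coe_le_norm x)
      have h3 : ε / (‖φ‖ + 1) * φ x ≤ ε / (‖φ‖ + 1) * ‖φ‖ :=
        mul_le_mul_of_nonneg_left h2 (by positivity)
      have h5 : ε / (‖φ‖ + 1) * (‖φ‖ + 1) = ε := div_mul_cancel₀ _ hnorm1.ne'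
      have h4 : ε / (‖φ‖ + 1) * ‖φ‖ < ε := by nlinarith [div_pos hε0 hnorm1]
      calc t' * φ x = lam * φ x + ε / (‖φ‖ + 1) * φ x := by rw [ht'def]; ring
        _ ≤ lam * φ x + ε / (‖φ‖ + 1) * ‖φ‖ := by linarith
        _ < lam * φ x + ε := by linarith
        _ ≤ ruelle μ f ⇑φ x := by linarith
    -- pick a competitor ψ
    have hex : ∃ r ∈ S, r < t' := exists_lt_of_csInf_lt hSne (by rw [← hlam]; exact ht'lam)
    obtain ⟨r, hrS, hrt⟩ := hex
    obtain ⟨ψ, hψpos, hψle⟩ := hrS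
    have hratio : Continuous fun x => φ x / ψ x :=
      φ.continuous.div ψ.continuous (fun x => (hψpos x).ne')
    obtain ⟨x₀, -, hx₀'⟩ := isCompact_univ.exists_isMaxOn Set.univ_nonempty hratio.continuousOn
    have hx₀ : ∀ y, φ y / ψ y ≤ φ x₀ / ψ x₀ := fun y => hx₀' (Set.mem_univ y)
    set sm := φ x₀ / ψ x₀ with hsm
    have hs0 : 0 < sm :=
      lt_of_lt_of_le (div_pos hx1pos (hψpos x₁)) (hx₀ x₁)
    have hφψ : ∀ y, φ y ≤ sm * ψ y := by
      intro y
      have h7 := hx₀ y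
      exact (div_le_iff₀ (hψpos y)).1 h7
    have hLmono : ruelle μ f ⇑φ x₀ ≤ sm * ruelle μ f ⇑ψ x₀ := by
      have h1 := ruelle_mono μ hf φ.continuous (ψ := fun y => sm * ψ y) (continuous_const.mul ψ.continuous) hφψ x₀
      rwa [ruelle_smul] at h1
    have hφx₀ : φ x₀ = sm * ψ x₀ := by
      rw [hsm, div_mul_cancel₀ _ (hψpos x₀).ne']
    have hone := ht'φ x₀
    have h2 := hψle x₀
    have h3 : sm * ruelle μ f ⇑ψ x₀ ≤ sm * (r * ψ x₀) := mul_le_mul_of_nonneg_left h2 hs0.le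
    have h4 : sm * (r * ψ x₀) < sm * (t' * ψ x₀) :=
      mul_lt_mul_of_pos_left (mul_lt_mul_of_pos_right hrt (hψpos x₀)) hs0
    rw [hφx₀] at hone
    have h5 : t' * (sm * ψ x₀) = sm * (t' * ψ x₀) := by ring
    linarith
  · push_neg at hpos
    have hφneg : ∀ x, φ x < 0 := by
      intro x
      have h1 := hcon x
      have h2 : ruelle μ f ⇑φ x ≤ 0 :=
        integral_nonpos fun a => mul_nonpos_iff.2 (Or.inl ⟨(Real.exp_pos _).le, hpos _⟩)
      nlinarith [hpos x]
    set ψ : C((ℕ → M), ℝ) := -φ with hψdef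
    have hψpos : ∀ x, 0 < ψ x := fun x => by
      simp only [hψdef, ContinuousMap.neg_apply]; linarith [hφneg x]
    have hLψ : ∀ x, ruelle μ f ⇑ψ x < lam * ψ x := by
      intro x
      have h1 := hcon x
      have hneg : ruelle μ f ⇑ψ x = -ruelle μ f ⇑φ x := by
        have e : (⇑ψ) = fun y => (-1 : ℝ) * φ y := by
          ext y; simp [hψdef]
        rw [e, ruelle_smul]; ring
      rw [hneg]
      simp only [hψdef, ContinuousMap.neg_apply]
      linarith
    obtain ⟨xr, -, hxr'⟩ := isCompact_univ.exists_isMaxOn Set.univ_nonempty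
      (((continuous_ruelle μ hf ψ.continuous).div ψ.continuous
        (fun x => (hψpos x).ne')).continuousOn)
    have hxr : ∀ y, ruelle μ f ⇑ψ y / ψ y ≤ ruelle μ f ⇑ψ xr / ψ xr :=
      fun y => hxr' (Set.mem_univ y)
    set r := ruelle μ f ⇑ψ xr / ψ xr with hr
    have hrS : r ∈ S := by
      refine ⟨ψ, hψpos, fun x => ?_⟩
      have h8 := hxr x
      exact (div_le_iff₀ (hψpos x)).1 h8
    have hrlt : r < lam := (div_lt_iff₀ (hψpos xr)).2 (by
      have := hLψ xr; linarith [mul_comm lam (ψ xr) ▸ this])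
    exact absurd (csInf_le hSbdd hrS) (not_le.2 hrlt)

end CW

/-- For every continuous potential `f` there exist `λ > 0` and a Borel
probability measure `ν` on `Ω` such that `∫ L_f φ dν = λ ∫ φ dν` for every continuous
`φ`, i.e. `L_f^* ν = λ ν`. -/
theorem statement12 [CompactSpace M] [BorelSpace M]
    (μ : Measure M) [IsProbabilityMeasure μ]
    (f : (ℕ → M) → ℝ) (hf : Continuous f) :
    ∃ lam : ℝ, 0 < lam ∧ ∃ ν : Measure (ℕ → M), IsProbabilityMeasure ν ∧
      ∀ φ : (ℕ → M) → ℝ, Continuous φ →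
        ∫ z, ruelle μ f φ z ∂ν = lam * ∫ z, φ z ∂ν := by
  haveI hM : Nonempty M := nonempty_of_prob μ
  haveI hΩ : Nonempty (ℕ → M) := ⟨fun _ => Classical.arbitrary M⟩
  obtain ⟨lam, hlam, hkey⟩ := exists_lam_key μ hf
  -- Hahn–Banach separation between the positive cone interior and the range of L - lam
  set s : Set C((ℕ → M), ℝ) := {g | ∀ x, 0 < g x} with hs
  set t : Set C((ℕ → M), ℝ) := {g | ∃ φ, g = Lop μ hf φ - lam • φ} with ht
  have hconv_s : Convex ℝ s := by
    intro g hg h hh a b ha hb hab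
    show ∀ x, 0 < (a • g + b • h) x
    intro x
    simp only [ContinuousMap.add_apply, ContinuousMap.smul_apply, smul_eq_mul]
    rcases ha.eq_or_lt with hae | ha'
    · have hb1 : b = 1 := by linarith
      rw [← hae, hb1]
      have := hh x
      simpa using this
    · have h1 : 0 < a * g x := mul_pos ha' (hg x)
      have h2 : 0 ≤ b * h x := mul_nonneg hb (hh x).le
      linarith
  have hopen_s : IsOpen s := by
    rw [Metric.isOpen_iff]
    intro g hg
    obtain ⟨x₀, -, hx₀⟩ :=
      isCompact_univ.exists_isMinOn Set.univ_nonempty g.continuous.continuousOn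
    have hgx₀ : 0 < g x₀ := hg x₀
    refine ⟨g x₀, hgx₀, fun h hdist => ?_⟩
    intro x
    rw [Metric.mem_ball] at hdist
    have h1 : dist (h x) (g x) ≤ dist h g := ContinuousMap.dist_apply_le_dist x
    have h2 : |h x - g x| ≤ dist h g := by rwa [Real.dist_eq] at h1
    have h3 := abs_le.1 h2
    have h4 : g x₀ ≤ g x := hx₀ (Set.mem_univ x)
    linarith [h3.1]
  have hconv_t : Convex ℝ t := by
    rintro g₁ ⟨φ₁, rfl⟩ g₂ ⟨φ₂, rfl⟩ a b ha hb hab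
    refine ⟨a • φ₁ + b • φ₂, ?_⟩
    rw [Lop_add, Lop_smul, Lop_smul]
    ext x
    simp only [ContinuousMap.add_apply, ContinuousMap.smul_apply, ContinuousMap.sub_apply,
      smul_eq_mul]
    ring
  have hdisj : Disjoint s t := by
    rw [Set.disjoint_left]
    rintro g hgs ⟨φ, rfl⟩
    obtain ⟨x, hx⟩ := hkey φ
    have hgx : ∀ y, 0 < (Lop μ hf φ - lam • φ) y := hgs
    have := hgx x
    simp only [ContinuousMap.sub_apply, ContinuousMap.smul_apply, smul_eq_mul] at this
    have h2 : Lop μ hf φ x = ruelle μ f ⇑φ x := rfl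
    rw [h2] at this
    linarith
  obtain ⟨ℓ₀, u, hsu, htu⟩ := geometric_hahn_banach_open hconv_s hopen_s hconv_t hdisj
  have h0t : (0 : C((ℕ → M), ℝ)) ∈ t := ⟨0, by rw [Lop_zero]; simp⟩
  have hu0 : u ≤ 0 := by simpa using htu 0 h0t
  have htzero : ∀ g ∈ t, ℓ₀ g = 0 := by
    rintro g ⟨φ, rfl⟩
    by_contra hne
    set c := (u - 1) / ℓ₀ (Lop μ hf φ - lam • φ) with hc
    have hmem : c • (Lop μ hf φ - lam • φ) ∈ t := by
      refine ⟨c • φ, ?_⟩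
      rw [Lop_smul]
      ext x
      simp only [ContinuousMap.smul_apply, ContinuousMap.sub_apply, smul_eq_mul]
      ring
    have h5 := htu _ hmem
    rw [ℓ₀.map_smul, smul_eq_mul, hc, div_mul_cancel₀ _ hne] at h5
    linarith
  have hs_pos : ∀ g : C((ℕ → M), ℝ), (∀ x, 0 < g x) → 0 < -ℓ₀ g := by
    intro g hg
    have := hsu g hg
    linarith
  have hone0 : 0 < -ℓ₀ 1 := hs_pos 1 (fun x => by simp)
  have hpos' : ∀ g : C((ℕ → M), ℝ), (∀ x, 0 ≤ g x) → 0 ≤ -ℓ₀ g := by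
    intro g hg
    by_contra hneg
    push_neg at hneg
    have hgpos : 0 < ℓ₀ g := by linarith
    have hcpos : 0 < ℓ₀ g / (2 * (-ℓ₀ 1)) := div_pos hgpos (by linarith)
    set c := ℓ₀ g / (2 * (-ℓ₀ 1)) with hcdef
    have hmem : ∀ x, 0 < (g + c • (1 : C((ℕ → M), ℝ))) x := by
      intro x
      simp only [ContinuousMap.add_apply, ContinuousMap.smul_apply, ContinuousMap.one_apply,
        smul_eq_mul, mul_one]
      have := hg x
      linarith
    have h2 := hs_pos _ hmem
    rw [map_add, ℓ₀.map_smul, smul_eq_mul] at h2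
    have hne1 : ℓ₀ (1 : C((ℕ → M), ℝ)) ≠ 0 := by
      intro hzero
      rw [hzero] at hone0
      simp at hone0
    have h3 : c * (-ℓ₀ 1) = ℓ₀ g / 2 := by
      rw [hcdef]
      field_simp
    nlinarith
  -- the normalized positive functional
  set m : C((ℕ → M), ℝ) →ₗ[ℝ] ℝ := (-ℓ₀ 1)⁻¹ • (-ℓ₀.toLinearMap) with hm
  have hmapp : ∀ g : C((ℕ → M), ℝ), m g = (-ℓ₀ 1)⁻¹ * (-ℓ₀ g) := fun g => rfl
  have hmpos : ∀ g : C((ℕ → M), ℝ), (∀ x, 0 ≤ g x) → 0 ≤ m g := fun g hg => by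
    rw [hmapp]
    exact mul_nonneg (inv_nonneg.2 hone0.le) (hpos' g hg)
  have hmone : m 1 = 1 := by
    rw [hmapp]
    exact inv_mul_cancel₀ hone0.ne'
  have hmeig : ∀ φ : C((ℕ → M), ℝ), m (Lop μ hf φ) = lam * m φ := by
    intro φ
    have h1 := htzero _ ⟨φ, rfl⟩
    rw [map_sub, ℓ₀.map_smul, smul_eq_mul] at h1
    rw [hmapp, hmapp]
    have h2 : ℓ₀ (Lop μ hf φ) = lam * ℓ₀ φ := by linarith
    rw [h2]; ring
  -- the Riesz measure
  refine ⟨lam, hlam, RMKaux.rMeasure m hmpos, RMKaux.rMeasure_prob m hmpos hmone, ?_⟩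
  intro φ hφ
  have h1 := RMKaux.rmk_rep m hmpos hmone (Lop μ hf ⟨φ, hφ⟩)
  have h2 := RMKaux.rmk_rep m hmpos hmone ⟨φ, hφ⟩
  have h3 : ∫ z, ruelle μ f φ z ∂(RMKaux.rMeasure m hmpos)
      = ∫ x, (Lop μ hf ⟨φ, hφ⟩) x ∂(RMKaux.rMeasure m hmpos) := rfl
  rw [h3, h1, hmeig, ← h2]
  rfl

end Paper
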